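/- arXiv:2302.12718 — 2 statements merged into one kernel-verified Lean document; each statement's English description precedes it below -/
import Mathlib

section
/- Importance weights for separable effects: under the separable-effects assumptions, fix k ∈ {1,…,K} and a_Y, a_D ∈ {0,1}, and let p^{obs}(x) = P(X = x | Ȳ_{k−1} = 0, D̄_k = 0, A = a_Y) and p^{int}(x) = P(X = x | D̄^{a_Y,a_D}_k = 0, Ȳ^{a_Y,a_D}_{k−1} = 0). Assume h_D(l,x,a) < 1 for all l ≤ k, all x and a ∈ {0,1}. Then there exists a constant c > 0, not depending on x, such that for every x with p^{obs}(x) > 0, p^{int}(x) / p^{obs}(x) = c / [P(A = a_Y | X = x) · Π_{l=1}^{k} (1 − h_D(l,x,a_Y)) / (1 − h_D(l,x,a_D))]; in particular the density ratio is constant in x beyond the propensity factor whenever the effect of treatment on the competing-event hazard does not depend on covariates. -/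
/-!
STATEMENT 12: Importance weights for separable effects. Under the separable-effects
assumptions, fix `k ∈ {1,…,K}` and `a_Y, a_D ∈ {0,1}`, and let
`p^{obs}(x) = P(X = x | Ȳ_{k−1} = 0, D̄_k = 0, A = a_Y)` and
`p^{int}(x) = P(X = x | D̄^{a_Y,a_D}_k = 0, Ȳ^{a_Y,a_D}_{k−1} = 0)`.
Assume `h_D(l,x,a) < 1` for all `l ≤ k`, all `x` and `a ∈ {0,1}`. Then there exists
a constant `c > 0` (finite, not depending on `x`) such that for every `x` with
`p^{obs}(x) > 0`,
`p^{int}(x) / p^{obs}(x)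
  = c / [P(A = a_Y | X = x) · Π_{l=1}^{k} (1 − h_D(l,x,a_Y)) / (1 − h_D(l,x,a_D))]`.
-/

open MeasureTheory ProbabilityTheory Finset
open scoped ENNReal

noncomputable section

namespace Stmt12

variable {Ω 𝓧 : Type*} [MeasurableSpace Ω] [MeasurableSpace 𝓧] [MeasurableSingletonClass 𝓧]

/-- The event that the history `V̄_k = (V_1, …, V_k)` is identically zero; for `k = 0`
this is all of `Ω` (the convention `V̄_0 = 0`). -/
def allZero (V : ℕ → Ω → ℕ) (k : ℕ) : Set Ω :=
  {ω | ∀ l, 1 ≤ l → l ≤ k → V l ω = 0}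

/-- Conditioning event of the main-event hazard `h_Y(k,x,a)`:
`{D̄_k = 0, Ȳ_{k−1} = 0, X = x, A = a}` (the competing event is resolved before the
main event within each interval). -/
def atRiskY (Y D : ℕ → Ω → ℕ) (X : Ω → 𝓧) (A : Ω → ℕ) (k : ℕ) (x : 𝓧) (a : ℕ) : Set Ω :=
  allZero D k ∩ allZero Y (k - 1) ∩ {ω | X ω = x} ∩ {ω | A ω = a}

/-- Conditioning event of the competing-event hazard `h_D(k,x,a)`:
`{D̄_{k−1} = 0, Ȳ_{k−1} = 0, X = x, A = a}`. -/
def atRiskD (Y D : ℕ → Ω → ℕ) (X : Ω → 𝓧) (A : Ω → ℕ) (k : ℕ) (x : 𝓧) (a : ℕ) : Set Ω :=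
  allZero D (k - 1) ∩ allZero Y (k - 1) ∩ {ω | X ω = x} ∩ {ω | A ω = a}

/-- Conditional hazard of the main event,
`h_Y(k,x,a) = P(Y_k = 1 | D̄_k = 0, Ȳ_{k−1} = 0, X = x, A = a)`. -/
def hazY (μ : Measure Ω) (Y D : ℕ → Ω → ℕ) (X : Ω → 𝓧) (A : Ω → ℕ)
    (k : ℕ) (x : 𝓧) (a : ℕ) : ℝ≥0∞ :=
  μ[|atRiskY Y D X A k x a] {ω | Y k ω = 1}

/-- Conditional hazard of the competing event,
`h_D(k,x,a) = P(D_k = 1 | D̄_{k−1} = 0, Ȳ_{k−1} = 0, X = x, A = a)`. -/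
def hazD (μ : Measure Ω) (Y D : ℕ → Ω → ℕ) (X : Ω → 𝓧) (A : Ω → ℕ)
    (k : ℕ) (x : 𝓧) (a : ℕ) : ℝ≥0∞ :=
  μ[|atRiskD Y D X A k x a] {ω | D k ω = 1}

set_option linter.unusedSectionVars false

set_option maxHeartbeats 1000000

lemma allZero_zero (V : ℕ → Ω → ℕ) : allZero V 0 = Set.univ := by
  ext ω; simp only [allZero, Set.mem_setOf_eq, Set.mem_univ, iff_true]
  intro l h1 h2; omega

lemma allZero_succ (V : ℕ → Ω → ℕ) (n : ℕ) :
    allZero V (n+1) = allZero V n ∩ {ω | V (n+1) ω = 0} := by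
  ext ω
  simp only [allZero, Set.mem_inter_iff, Set.mem_setOf_eq]
  constructor
  · intro h; exact ⟨fun l h1 h2 => h l h1 (by omega), h (n+1) (by omega) le_rfl⟩
  · rintro ⟨h, hv⟩ l h1 h2
    rcases eq_or_lt_of_le h2 with rfl | hl
    · exact hv
    · exact h l h1 (by omega)

lemma measurableSet_allZero {V : ℕ → Ω → ℕ} (hV : ∀ l, Measurable (V l)) (k : ℕ) :
    MeasurableSet (allZero V k) := by
  have h : allZero V k = ⋂ l ∈ Finset.Icc 1 k, {ω | V l ω = 0} := by
    ext ω; simp [allZero]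
  rw [h]
  exact MeasurableSet.biInter (Finset.Icc 1 k).countable_toSet
    (fun l _ => hV l (measurableSet_singleton 0))

lemma cond_mul_meas (μ : Measure Ω) [IsFiniteMeasure μ] {E : Set Ω}
    (hE : MeasurableSet E) (T : Set Ω) :
    μ E * μ[|E] T = μ (E ∩ T) := by
  rcases eq_or_ne (μ E) 0 with h0 | h0
  · rw [h0, zero_mul]
    exact (measure_mono_null Set.inter_subset_left h0).symm
  · rw [cond_apply hE, ← mul_assoc, ENNReal.mul_inv_cancel h0 (measure_ne_top μ E), one_mul]

lemma cond_ne_top (μ : Measure Ω) [IsFiniteMeasure μ] {E : Set Ω}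
    (hE : MeasurableSet E) (h0 : μ E ≠ 0) (T : Set Ω) : μ[|E] T ≠ ∞ := by
  rw [cond_apply hE]
  exact ENNReal.mul_ne_top (ENNReal.inv_ne_top.mpr h0) (measure_ne_top μ _)

lemma binStep (μ : Measure Ω) [IsFiniteMeasure μ] {E : Set Ω} (hE : MeasurableSet E)
    {V : Ω → ℕ} (hV : Measurable V) (hbin : ∀ ω, V ω = 0 ∨ V ω = 1) :
    μ (E ∩ {ω | V ω = 0}) = μ E * (1 - μ[|E] {ω | V ω = 1}) := by
  rcases eq_or_ne (μ E) 0 with h0 | h0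
  · rw [measure_mono_null Set.inter_subset_left h0, h0, zero_mul]
  · have hpart : μ (E ∩ {ω | V ω = 0}) + μ (E ∩ {ω | V ω = 1}) = μ E := by
      rw [← measure_union ?_ (hE.inter ?_)]
      · congr 1
        ext ω
        simp only [Set.mem_union, Set.mem_inter_iff, Set.mem_setOf_eq]
        rcases hbin ω with h | h <;> simp [h]
      · rw [Set.disjoint_left]
        rintro ω ⟨-, h1⟩ ⟨-, h2⟩
        simp only [Set.mem_setOf_eq] at h1 h2
        omega
      · exact hV (measurableSet_singleton 1)
    have hsum : μ[|E] {ω | V ω = 0} + μ[|E] {ω | V ω = 1} = 1 := by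
      rw [cond_apply hE, cond_apply hE, ← mul_add, hpart,
        ENNReal.inv_mul_cancel h0 (measure_ne_top μ E)]
    have h1 : (1 : ℝ≥0∞) - μ[|E] {ω | V ω = 1} = μ[|E] {ω | V ω = 0} := by
      rw [← hsum, ENNReal.add_sub_cancel_right (cond_ne_top μ hE h0 _)]
    rw [h1, ← cond_mul_meas μ hE]

lemma chainRule (μ : Measure Ω) [IsProbabilityMeasure μ] (Yw Dw : ℕ → Ω → ℕ)
    (hYm : ∀ l, Measurable (Yw l)) (hDm : ∀ l, Measurable (Dw l))
    (hYb : ∀ l ω, Yw l ω = 0 ∨ Yw l ω = 1) (hDb : ∀ l ω, Dw l ω = 0 ∨ Dw l ω = 1)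
    {B : Set Ω} (hB : MeasurableSet B) (k : ℕ) (hk : 1 ≤ k) :
    μ (allZero Dw k ∩ allZero Yw (k-1) ∩ B)
      = μ B
        * (∏ l ∈ Finset.Icc 1 k,
            (1 - μ[|allZero Dw (l-1) ∩ allZero Yw (l-1) ∩ B] {ω | Dw l ω = 1}))
        * ∏ l ∈ Finset.Icc 1 (k-1),
            (1 - μ[|allZero Dw l ∩ allZero Yw (l-1) ∩ B] {ω | Yw l ω = 1}) := by
  induction k, hk using Nat.le_induction with
  | base =>
    have e1 : allZero Dw 1 ∩ allZero Yw 0 ∩ B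
        = (allZero Dw 0 ∩ allZero Yw 0 ∩ B) ∩ {ω | Dw 1 ω = 0} := by
      rw [show (1:ℕ) = 0 + 1 from rfl, allZero_succ]
      ext ω; simp only [Set.mem_inter_iff]; tauto
    rw [e1, binStep μ (((measurableSet_allZero hDm 0).inter
      (measurableSet_allZero hYm 0)).inter hB) (hDm 1) (hDb 1)]
    have e2 : allZero Dw 0 ∩ allZero Yw 0 ∩ B = B := by
      rw [allZero_zero, allZero_zero]; simp
    simp only [show (1:ℕ) - 1 = 0 from rfl, Finset.Icc_self, Finset.prod_singleton,
      Finset.Icc_eq_empty (by omega : ¬(1:ℕ) ≤ 0), Finset.prod_empty, mul_one]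
    rw [e2]
  | succ n hn ih =>
    obtain ⟨m, rfl⟩ : ∃ m, n = m + 1 := ⟨n - 1, by omega⟩
    have e1 : allZero Dw (m+1+1) ∩ allZero Yw (m+1+1-1) ∩ B
        = (allZero Dw (m+1) ∩ allZero Yw (m+1) ∩ B) ∩ {ω | Dw (m+1+1) ω = 0} := by
      rw [allZero_succ Dw (m+1)]
      ext ω; simp only [Set.mem_inter_iff, Nat.add_sub_cancel]; tauto
    have e2 : allZero Dw (m+1) ∩ allZero Yw (m+1) ∩ B
        = (allZero Dw (m+1) ∩ allZero Yw m ∩ B) ∩ {ω | Yw (m+1) ω = 0} := by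
      rw [allZero_succ Yw m]
      ext ω; simp only [Set.mem_inter_iff]; tauto
    have hm1 : MeasurableSet (allZero Dw (m+1) ∩ allZero Yw (m+1) ∩ B) :=
      ((measurableSet_allZero hDm _).inter (measurableSet_allZero hYm _)).inter hB
    have hm2 : MeasurableSet (allZero Dw (m+1) ∩ allZero Yw m ∩ B) :=
      ((measurableSet_allZero hDm _).inter (measurableSet_allZero hYm _)).inter hB
    have key : μ (allZero Dw (m+1+1) ∩ allZero Yw (m+1+1-1) ∩ B)
        = μ (allZero Dw (m+1) ∩ allZero Yw m ∩ B)
          * (1 - μ[|allZero Dw (m+1) ∩ allZero Yw m ∩ B] {ω | Yw (m+1) ω = 1})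
          * (1 - μ[|allZero Dw (m+1) ∩ allZero Yw (m+1) ∩ B] {ω | Dw (m+1+1) ω = 1}) := by
      rw [e1, binStep μ hm1 (hDm (m+1+1)) (hDb (m+1+1)), e2,
        binStep μ hm2 (hYm (m+1)) (hYb (m+1)), ← e2]
    rw [key]
    simp only [Nat.add_sub_cancel] at ih
    rw [ih]
    rw [Finset.prod_Icc_succ_top (show 1 ≤ m+1+1 by omega),
      Finset.prod_Icc_succ_top (show 1 ≤ m+1 by omega)]
    simp only [Nat.add_sub_cancel]
    rw [Finset.prod_Icc_succ_top (show 1 ≤ m+1 by omega)]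
    simp only [Nat.add_sub_cancel]
    ring

/-- Trajectory of the paired process on the window `[1,K]`, normalized to `(0,0)`
outside the window. -/
def ntraj (Z : ℕ → Ω → ℕ × ℕ) (K : ℕ) (ω : Ω) : ℕ → ℕ × ℕ :=
  fun j => if 1 ≤ j ∧ j ≤ K then Z j ω else (0, 0)

/-- The countable set of normalized trajectories. -/
def normSet (K : ℕ) : Set (ℕ → ℕ × ℕ) :=
  Set.range (fun (u : Fin (K+1) → ℕ × ℕ) => fun (j : ℕ) =>
    if h : 1 ≤ j ∧ j ≤ K then u ⟨j, Nat.lt_succ_of_le h.2⟩ else (0, 0))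

lemma ntraj_mem_normSet (Z : ℕ → Ω → ℕ × ℕ) (K : ℕ) (ω : Ω) :
    ntraj Z K ω ∈ normSet K := by
  refine ⟨fun i => Z i ω, funext fun j => ?_⟩
  by_cases h : 1 ≤ j ∧ j ≤ K
  · simp [ntraj, h]
  · simp [ntraj, h]

lemma normSet_countable (K : ℕ) : (normSet (K := K)).Countable := Set.countable_range _

lemma normSet_zero {K : ℕ} {t : ℕ → ℕ × ℕ} (ht : t ∈ normSet K) {j : ℕ}
    (hj : ¬(1 ≤ j ∧ j ≤ K)) : t j = (0, 0) := by
  obtain ⟨u, rfl⟩ := ht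
  exact dif_neg hj

lemma atom_eq {Z : ℕ → Ω → ℕ × ℕ} {K : ℕ} {t : ℕ → ℕ × ℕ} (ht : t ∈ normSet K) :
    {ω | ntraj Z K ω = t} = {ω | ∀ j, 1 ≤ j → j ≤ K → Z j ω = t j} := by
  ext ω
  simp only [Set.mem_setOf_eq, funext_iff]
  constructor
  · intro h j h1 h2
    have := h j
    rwa [ntraj, if_pos ⟨h1, h2⟩] at this
  · intro h j
    by_cases hj : 1 ≤ j ∧ j ≤ K
    · rw [ntraj, if_pos hj]; exact h j hj.1 hj.2
    · rw [ntraj, if_neg hj, normSet_zero ht hj]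

lemma measurableSet_atom {Z : ℕ → Ω → ℕ × ℕ} (hZ : ∀ j, Measurable (Z j)) (K : ℕ)
    (t : ℕ → ℕ × ℕ) : MeasurableSet {ω | ntraj Z K ω = t} := by
  have h : {ω | ntraj Z K ω = t} = ⋂ j, {ω | ntraj Z K ω j = t j} := by
    ext ω; simp [funext_iff]
  rw [h]
  refine MeasurableSet.iInter fun j => ?_
  by_cases hj : 1 ≤ j ∧ j ≤ K
  · have h2 : {ω | ntraj Z K ω j = t j} = Z j ⁻¹' {t j} := by
      ext ω; simp [ntraj, hj]
    rw [h2]; exact hZ j (measurableSet_singleton _)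
  · have h2 : {ω | ntraj Z K ω j = t j} = {ω : Ω | ((0,0) : ℕ × ℕ) = t j} := by
      ext ω; simp [ntraj, hj]
    rw [h2]; exact MeasurableSet.const _

lemma pre_decomp (Z : ℕ → Ω → ℕ × ℕ) (K : ℕ) (U : Set (ℕ → ℕ × ℕ)) :
    ntraj Z K ⁻¹' U = ⋃ t ∈ normSet K ∩ U, {ω | ntraj Z K ω = t} := by
  ext ω
  simp only [Set.mem_preimage, Set.mem_iUnion, Set.mem_inter_iff, Set.mem_setOf_eq, exists_prop]
  constructor
  · intro h; exact ⟨ntraj Z K ω, ⟨ntraj_mem_normSet Z K ω, h⟩, rfl⟩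
  · rintro ⟨t, ⟨-, htU⟩, ht⟩; rw [ht]; exact htU

lemma measurableSet_pre {Z : ℕ → Ω → ℕ × ℕ} (hZ : ∀ j, Measurable (Z j)) (K : ℕ)
    (U : Set (ℕ → ℕ × ℕ)) : MeasurableSet (ntraj Z K ⁻¹' U) := by
  rw [pre_decomp]
  exact MeasurableSet.biUnion ((normSet_countable K).mono Set.inter_subset_left)
    (fun t _ => measurableSet_atom hZ K t)

lemma measure_pre_eq (ν₁ ν₂ : Measure Ω) {Z : ℕ → Ω → ℕ × ℕ}
    (hZ : ∀ j, Measurable (Z j)) (K : ℕ)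
    (hatom : ∀ t ∈ normSet K, ν₁ {ω | ntraj Z K ω = t} = ν₂ {ω | ntraj Z K ω = t})
    (U : Set (ℕ → ℕ × ℕ)) :
    ν₁ (ntraj Z K ⁻¹' U) = ν₂ (ntraj Z K ⁻¹' U) := by
  have hc : ((normSet K ∩ U : Set _)).Countable :=
    (normSet_countable K).mono Set.inter_subset_left
  have hd : (normSet K ∩ U).PairwiseDisjoint (fun t => {ω | ntraj Z K ω = t}) := by
    intro t _ t' _ hne
    simp only [Function.onFun]
    rw [Set.disjoint_left]
    intro ω h1 h2
    exact hne (h1.symm.trans h2)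
  have hm : ∀ t ∈ normSet K ∩ U, MeasurableSet {ω | ntraj Z K ω = t} :=
    fun t _ => measurableSet_atom hZ K t
  rw [pre_decomp, measure_biUnion hc hd hm, measure_biUnion hc hd hm]
  exact tsum_congr fun t => hatom t t.2.1

lemma cond_transfer (μ : Measure Ω) [IsProbabilityMeasure μ] (Z : ℕ → Ω → ℕ × ℕ) (K : ℕ)
    (hZ : ∀ j, Measurable (Z j)) {C1 C2 : Set Ω} (hC1 : MeasurableSet C1)
    (hC2 : MeasurableSet C2) (h1 : μ C1 ≠ 0) (h2 : μ C2 ≠ 0)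
    (hagree : ∀ U : Set (ℕ → ℕ × ℕ), μ[|C1] (ntraj Z K ⁻¹' U) = μ[|C2] (ntraj Z K ⁻¹' U))
    (U1 U2 : Set (ℕ → ℕ × ℕ)) :
    μ[|ntraj Z K ⁻¹' U1 ∩ C1] (ntraj Z K ⁻¹' U2)
      = μ[|ntraj Z K ⁻¹' U1 ∩ C2] (ntraj Z K ⁻¹' U2) := by
  set r : ℝ≥0∞ := μ C1 * (μ C2)⁻¹ with hr
  have hr0 : r ≠ 0 := mul_ne_zero h1 (ENNReal.inv_ne_zero.mpr (measure_ne_top μ C2))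
  have hrT : r ≠ ∞ := ENNReal.mul_ne_top (measure_ne_top μ C1) (ENNReal.inv_ne_top.mpr h2)
  have key : ∀ U : Set (ℕ → ℕ × ℕ), μ (ntraj Z K ⁻¹' U ∩ C1) = r * μ (ntraj Z K ⁻¹' U ∩ C2) := by
    intro U
    have e1 : μ (ntraj Z K ⁻¹' U ∩ C1) = μ C1 * μ[|C1] (ntraj Z K ⁻¹' U) := by
      rw [cond_mul_meas μ hC1, Set.inter_comm]
    rw [e1, hagree U, cond_apply hC2, Set.inter_comm C2, hr]
    ring
  have hint : ∀ (Ua Ub : Set (ℕ → ℕ × ℕ)) (C : Set Ω),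
      (ntraj Z K ⁻¹' Ua ∩ C) ∩ ntraj Z K ⁻¹' Ub = ntraj Z K ⁻¹' (Ua ∩ Ub) ∩ C := by
    intro Ua Ub C
    ext ω
    simp only [Set.mem_inter_iff, Set.mem_preimage]
    tauto
  rw [cond_apply ((measurableSet_pre hZ K U1).inter hC1),
    cond_apply ((measurableSet_pre hZ K U1).inter hC2), hint, hint, key, key]
  rw [ENNReal.mul_inv (Or.inl hr0) (Or.inl hrT)]
  rw [show r⁻¹ * (μ (ntraj Z K ⁻¹' U1 ∩ C2))⁻¹ * (r * μ (ntraj Z K ⁻¹' (U1 ∩ U2) ∩ C2))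
      = (r⁻¹ * r) * ((μ (ntraj Z K ⁻¹' U1 ∩ C2))⁻¹ * μ (ntraj Z K ⁻¹' (U1 ∩ U2) ∩ C2)) by ring,
    ENNReal.inv_mul_cancel hr0 hrT, one_mul]

lemma final_alg (eI eO m pi dD dD' yP : ℝ≥0∞)
    (heI0 : eI ≠ 0) (heIT : eI ≠ ∞) (heO0 : eO ≠ 0) (heOT : eO ≠ ∞)
    (hm0 : m ≠ 0) (hmT : m ≠ ∞) (hpi0 : pi ≠ 0) (hpiT : pi ≠ ∞)
    (hdD0 : dD ≠ 0) (hdDT : dD ≠ ∞) (hdD'0 : dD' ≠ 0) (hdD'T : dD' ≠ ∞)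
    (hyP0 : yP ≠ 0) (hyPT : yP ≠ ∞) :
    eI⁻¹ * (m * dD' * yP) / (eO⁻¹ * (m * pi * dD * yP))
      = (eO / eI) / (pi * (dD / dD')) := by
  have hNum_T : eI⁻¹ * (m * dD' * yP) ≠ ∞ :=
    ENNReal.mul_ne_top (ENNReal.inv_ne_top.mpr heI0)
      (ENNReal.mul_ne_top (ENNReal.mul_ne_top hmT hdD'T) hyPT)
  have hDen0 : eO⁻¹ * (m * pi * dD * yP) ≠ 0 :=
    mul_ne_zero (ENNReal.inv_ne_zero.mpr heOT)
      (mul_ne_zero (mul_ne_zero (mul_ne_zero hm0 hpi0) hdD0) hyP0)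
  have hLT : eI⁻¹ * (m * dD' * yP) / (eO⁻¹ * (m * pi * dD * yP)) ≠ ∞ := by
    rw [div_eq_mul_inv]
    exact ENNReal.mul_ne_top hNum_T (ENNReal.inv_ne_top.mpr hDen0)
  have hc0 : eO / eI ≠ ∞ := by
    rw [div_eq_mul_inv]
    exact ENNReal.mul_ne_top heOT (ENNReal.inv_ne_top.mpr heI0)
  have hq0 : pi * (dD / dD') ≠ 0 := by
    rw [div_eq_mul_inv]
    exact mul_ne_zero hpi0 (mul_ne_zero hdD0 (ENNReal.inv_ne_zero.mpr hdD'T))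
  have hRT : (eO / eI) / (pi * (dD / dD')) ≠ ∞ := by
    rw [div_eq_mul_inv (eO / eI)]
    exact ENNReal.mul_ne_top hc0 (ENNReal.inv_ne_top.mpr hq0)
  rw [← ENNReal.toReal_eq_toReal_iff' hLT hRT]
  simp only [ENNReal.toReal_div, ENNReal.toReal_mul, ENNReal.toReal_inv]
  have rI := ENNReal.toReal_ne_zero.mpr ⟨heI0, heIT⟩
  have rO := ENNReal.toReal_ne_zero.mpr ⟨heO0, heOT⟩
  have rm := ENNReal.toReal_ne_zero.mpr ⟨hm0, hmT⟩
  have rpi := ENNReal.toReal_ne_zero.mpr ⟨hpi0, hpiT⟩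
  have rdD := ENNReal.toReal_ne_zero.mpr ⟨hdD0, hdDT⟩
  have rdD' := ENNReal.toReal_ne_zero.mpr ⟨hdD'0, hdD'T⟩
  have ryP := ENNReal.toReal_ne_zero.mpr ⟨hyP0, hyPT⟩
  field_simp

lemma cond_congr (μ : Measure Ω) {E T1 T2 : Set Ω} (hE : MeasurableSet E)
    (h : E ∩ T1 = E ∩ T2) : μ[|E] T1 = μ[|E] T2 := by
  rw [cond_apply hE, cond_apply hE, h]

lemma ntraj_apply_in {Z : ℕ → Ω → ℕ × ℕ} {K j : ℕ} (h1 : 1 ≤ j) (h2 : j ≤ K) (ω : Ω) :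
    ntraj Z K ω j = Z j ω := if_pos ⟨h1, h2⟩

theorem separable_effect_importance_weights
    [Countable 𝓧]
    (μ : Measure Ω) [IsProbabilityMeasure μ]
    (Y D : ℕ → Ω → ℕ) (X : Ω → 𝓧) (A : Ω → ℕ)
    -- measurability of the random variables
    (hXm : Measurable X) (hAm : Measurable A)
    (hYm : ∀ k, Measurable (Y k)) (hDm : ∀ k, Measurable (D k))
    -- binary indicators, absorbing events, mutual exclusivity
    (hYbin : ∀ k ω, Y k ω = 0 ∨ Y k ω = 1) (hDbin : ∀ k ω, D k ω = 0 ∨ D k ω = 1)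
    (hYmono : ∀ k ω, Y k ω ≤ Y (k + 1) ω) (hDmono : ∀ k ω, D k ω ≤ D (k + 1) ω)
    (hexcl : ∀ k ω, Y k ω * D k ω = 0)
    (hAbin : ∀ ω, A ω = 0 ∨ A ω = 1)
    (K : ℕ) (hK : 1 ≤ K)
    -- counterfactual indicators Y^{a_Y,a_D}_k, D^{a_Y,a_D}_k under the intervention
    -- do(A_Y = a_Y, A_D = a_D) on the two treatment components
    (Ysep Dsep : ℕ → ℕ → ℕ → Ω → ℕ)
    (hYsm : ∀ aY aD k, Measurable (Ysep aY aD k))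
    (hDsm : ∀ aY aD k, Measurable (Dsep aY aD k))
    (hYsbin : ∀ aY aD k ω, Ysep aY aD k ω = 0 ∨ Ysep aY aD k ω = 1)
    (hDsbin : ∀ aY aD k ω, Dsep aY aD k ω = 0 ∨ Dsep aY aD k ω = 1)
    (hYsmono : ∀ aY aD k ω, Ysep aY aD k ω ≤ Ysep aY aD (k + 1) ω)
    (hDsmono : ∀ aY aD k ω, Dsep aY aD k ω ≤ Dsep aY aD (k + 1) ω)
    (hsexcl : ∀ aY aD k ω, Ysep aY aD k ω * Dsep aY aD k ω = 0)
    -- (i) exchangeability: the family (Y^{a_Y,a_D}_k, D^{a_Y,a_D}_k)_{k ≤ K} is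
    -- conditionally independent of A given X (stated through the atoms of the
    -- discrete counterfactual family)
    (hexchS : ∀ aY aD a' x, (aY = 0 ∨ aY = 1) → (aD = 0 ∨ aD = 1) → (a' = 0 ∨ a' = 1) →
      μ {ω | X ω = x} ≠ 0 → μ ({ω | X ω = x} ∩ {ω | A ω = a'}) ≠ 0 →
      ∀ f g : ℕ → ℕ,
        μ[|{ω | X ω = x} ∩ {ω | A ω = a'}]
            {ω | ∀ j, 1 ≤ j → j ≤ K → (Ysep aY aD j ω = f j ∧ Dsep aY aD j ω = g j)}
          = μ[|{ω | X ω = x}]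
              {ω | ∀ j, 1 ≤ j → j ≤ K → (Ysep aY aD j ω = f j ∧ Dsep aY aD j ω = g j)})
    -- (ii) positivity
    (hposA : ∀ x, μ {ω | X ω = x} ≠ 0 → ∀ a', (a' = 0 ∨ a' = 1) →
      μ ({ω | X ω = x} ∩ {ω | A ω = a'}) ≠ 0)
    -- (iii) consistency: Y_k = Y^{A,A}_k and D_k = D^{A,A}_k
    (hconsS : ∀ k ω, Y k ω = Ysep (A ω) (A ω) k ω ∧ D k ω = Dsep (A ω) (A ω) k ω)
    -- (iv) dismissible components conditions
    (hdisY : ∀ aY k x, (aY = 0 ∨ aY = 1) → 1 ≤ k → k ≤ K →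
      μ[|allZero (Dsep aY 1) k ∩ allZero (Ysep aY 1) (k - 1) ∩ {ω | X ω = x}]
          {ω | Ysep aY 1 k ω = 1}
        = μ[|allZero (Dsep aY 0) k ∩ allZero (Ysep aY 0) (k - 1) ∩ {ω | X ω = x}]
            {ω | Ysep aY 0 k ω = 1})
    (hdisD : ∀ aD k x, (aD = 0 ∨ aD = 1) → 1 ≤ k → k ≤ K →
      μ[|allZero (Dsep 1 aD) (k - 1) ∩ allZero (Ysep 1 aD) (k - 1) ∩ {ω | X ω = x}]
          {ω | Dsep 1 aD k ω = 1}
        = μ[|allZero (Dsep 0 aD) (k - 1) ∩ allZero (Ysep 0 aD) (k - 1) ∩ {ω | X ω = x}]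
            {ω | Dsep 0 aD k ω = 1})
    -- positivity of all counterfactual conditioning events appearing above
    (hposSep : ∀ aY aD k x, (aY = 0 ∨ aY = 1) → (aD = 0 ∨ aD = 1) → 1 ≤ k → k ≤ K →
      μ {ω | X ω = x} ≠ 0 →
      μ (allZero (Dsep aY aD) k ∩ allZero (Ysep aY aD) (k - 1) ∩ {ω | X ω = x}) ≠ 0 ∧
        μ (allZero (Dsep aY aD) (k - 1) ∩ allZero (Ysep aY aD) (k - 1)
            ∩ {ω | X ω = x}) ≠ 0)
    (k : ℕ) (hk1 : 1 ≤ k) (hkK : k ≤ K)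
    (aY aD : ℕ) (haY : aY = 0 ∨ aY = 1) (haD : aD = 0 ∨ aD = 1)
    -- positivity of the observational conditioning events of the hazards
    (hposY : ∀ l a x, 1 ≤ l → l ≤ K → (a = 0 ∨ a = 1) → μ {ω | X ω = x} ≠ 0 →
      μ (atRiskY Y D X A l x a) ≠ 0)
    (hposD : ∀ l a x, 1 ≤ l → l ≤ K → (a = 0 ∨ a = 1) → μ {ω | X ω = x} ≠ 0 →
      μ (atRiskD Y D X A l x a) ≠ 0)
    -- positivity of the observational and interventional at-risk events
    (hposObs : μ (allZero Y (k - 1) ∩ allZero D k ∩ {ω | A ω = aY}) ≠ 0)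
    (hposInt : μ (allZero (Dsep aY aD) k ∩ allZero (Ysep aY aD) (k - 1)) ≠ 0)
    -- the competing-event hazard is strictly below one up to time k
    (hDlt1 : ∀ l a x, 1 ≤ l → l ≤ k → (a = 0 ∨ a = 1) → μ {ω | X ω = x} ≠ 0 →
      hazD μ Y D X A l x a < 1) :
    ∃ c : ℝ≥0∞, c ≠ 0 ∧ c ≠ ⊤ ∧
      ∀ x : 𝓧,
        μ[|allZero Y (k - 1) ∩ allZero D k ∩ {ω | A ω = aY}] {ω | X ω = x} ≠ 0 →
        μ[|allZero (Dsep aY aD) k ∩ allZero (Ysep aY aD) (k - 1)] {ω | X ω = x}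
            / μ[|allZero Y (k - 1) ∩ allZero D k ∩ {ω | A ω = aY}] {ω | X ω = x}
          = c / (μ[|{ω | X ω = x}] {ω | A ω = aY}
              * ∏ l ∈ Icc 1 k,
                  (1 - hazD μ Y D X A l x aY) / (1 - hazD μ Y D X A l x aD)) := by
  classical
  have hXsm : ∀ x : 𝓧, MeasurableSet {ω | X ω = x} := fun x => hXm (measurableSet_singleton x)
  have hAsm : ∀ a : ℕ, MeasurableSet {ω | A ω = a} := fun a => hAm (measurableSet_singleton a)
  have hEobs_m : MeasurableSet (allZero Y (k-1) ∩ allZero D k ∩ {ω | A ω = aY}) :=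
    ((measurableSet_allZero hYm _).inter (measurableSet_allZero hDm _)).inter (hAsm aY)
  have hEint_m : MeasurableSet (allZero (Dsep aY aD) k ∩ allZero (Ysep aY aD) (k-1)) :=
    (measurableSet_allZero (hDsm aY aD) _).inter (measurableSet_allZero (hYsm aY aD) _)
  refine ⟨μ (allZero Y (k-1) ∩ allZero D k ∩ {ω | A ω = aY})
      / μ (allZero (Dsep aY aD) k ∩ allZero (Ysep aY aD) (k-1)), ?_, ?_, ?_⟩
  · rw [div_eq_mul_inv]
    exact mul_ne_zero hposObs (ENNReal.inv_ne_zero.mpr (measure_ne_top μ _))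
  · rw [div_eq_mul_inv]
    exact ENNReal.mul_ne_top (measure_ne_top μ _) (ENNReal.inv_ne_top.mpr hposInt)
  intro x hx
  rw [cond_apply hEobs_m] at hx
  have hobs_ne : μ (allZero Y (k-1) ∩ allZero D k ∩ {ω | A ω = aY} ∩ {ω | X ω = x}) ≠ 0 :=
    fun h => hx (by rw [h, mul_zero])
  have hmx : μ {ω | X ω = x} ≠ 0 :=
    fun h => hobs_ne (measure_mono_null Set.inter_subset_right h)
  have hZm : ∀ b d : ℕ, ∀ j, Measurable (fun ω => (Ysep b d j ω, Dsep b d j ω)) :=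
    fun b d j => (hYsm b d j).prodMk (hDsm b d j)
  -- exchangeability transfer for trajectory events
  have hagree : ∀ b d a' : ℕ, (b = 0 ∨ b = 1) → (d = 0 ∨ d = 1) → (a' = 0 ∨ a' = 1) →
      ∀ U : Set (ℕ → ℕ × ℕ),
      μ[|{ω | X ω = x} ∩ {ω | A ω = a'}]
          (ntraj (fun j ω => (Ysep b d j ω, Dsep b d j ω)) K ⁻¹' U)
        = μ[|{ω | X ω = x}] (ntraj (fun j ω => (Ysep b d j ω, Dsep b d j ω)) K ⁻¹' U) := by
    intro b d a' hb hd ha' U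
    refine measure_pre_eq _ _ (hZm b d) K (fun t ht => ?_) U
    have hset : {ω | ntraj (fun j ω => (Ysep b d j ω, Dsep b d j ω)) K ω = t}
        = {ω | ∀ j, 1 ≤ j → j ≤ K → (Ysep b d j ω = (t j).1 ∧ Dsep b d j ω = (t j).2)} := by
      rw [atom_eq ht]
      ext ω
      simp [Prod.ext_iff]
    rw [hset]
    exact hexchS b d a' x hb hd ha' hmx (hposA x hmx a' ha')
      (fun j => (t j).1) (fun j => (t j).2)
  -- identification of the competing-event hazard in the counterfactual world
  have hIDD : ∀ b d : ℕ, (b = 0 ∨ b = 1) → (d = 0 ∨ d = 1) → ∀ l, 1 ≤ l → l ≤ K →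
      μ[|allZero (Dsep b d) (l-1) ∩ allZero (Ysep b d) (l-1) ∩ {ω | X ω = x}]
        {ω | Dsep b d l ω = 1} = hazD μ Y D X A l x d := by
    intro b d hb hd l hl1 hlK
    have step1 : μ[|allZero (Dsep b d) (l-1) ∩ allZero (Ysep b d) (l-1) ∩ {ω | X ω = x}]
          {ω | Dsep b d l ω = 1}
        = μ[|allZero (Dsep d d) (l-1) ∩ allZero (Ysep d d) (l-1) ∩ {ω | X ω = x}]
            {ω | Dsep d d l ω = 1} := by
      rcases hb with rfl | rfl <;> rcases hd with rfl | rfl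
      · rfl
      · exact (hdisD 1 l x (Or.inr rfl) hl1 hlK).symm
      · exact hdisD 0 l x (Or.inl rfl) hl1 hlK
      · rfl
    rw [step1]
    have pre1 : allZero (Dsep d d) (l-1) ∩ allZero (Ysep d d) (l-1)
        = ntraj (fun j ω => (Ysep d d j ω, Dsep d d j ω)) K ⁻¹'
            {t | (∀ j, 1 ≤ j → j ≤ l-1 → (t j).2 = 0) ∧ ∀ j, 1 ≤ j → j ≤ l-1 → (t j).1 = 0} := by
      ext ω
      simp only [Set.mem_inter_iff, Set.mem_preimage, allZero, Set.mem_setOf_eq]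
      constructor
      · rintro ⟨hD, hY⟩
        refine ⟨fun j h1 h2 => ?_, fun j h1 h2 => ?_⟩
        · rw [ntraj_apply_in h1 (by omega)]; exact hD j h1 h2
        · rw [ntraj_apply_in h1 (by omega)]; exact hY j h1 h2
      · rintro ⟨hD, hY⟩
        refine ⟨fun j h1 h2 => ?_, fun j h1 h2 => ?_⟩
        · have := hD j h1 h2; rwa [ntraj_apply_in h1 (by omega)] at this
        · have := hY j h1 h2; rwa [ntraj_apply_in h1 (by omega)] at this
    have pre2 : {ω | Dsep d d l ω = 1}
        = ntraj (fun j ω => (Ysep d d j ω, Dsep d d j ω)) K ⁻¹' {t | (t l).2 = 1} := by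
      ext ω
      simp only [Set.mem_setOf_eq, Set.mem_preimage, ntraj_apply_in hl1 hlK]
    have t1 := cond_transfer μ (fun j ω => (Ysep d d j ω, Dsep d d j ω)) K (hZm d d)
      ((hXsm x).inter (hAsm d)) (hXsm x) (hposA x hmx d hd) hmx (hagree d d d hd hd hd)
      {t | (∀ j, 1 ≤ j → j ≤ l-1 → (t j).2 = 0) ∧ ∀ j, 1 ≤ j → j ≤ l-1 → (t j).1 = 0}
      {t | (t l).2 = 1}
    have e3 : ntraj (fun j ω => (Ysep d d j ω, Dsep d d j ω)) K ⁻¹'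
          {t | (∀ j, 1 ≤ j → j ≤ l-1 → (t j).2 = 0) ∧ ∀ j, 1 ≤ j → j ≤ l-1 → (t j).1 = 0}
          ∩ ({ω | X ω = x} ∩ {ω | A ω = d}) = atRiskD Y D X A l x d := by
      rw [← pre1]
      ext ω
      simp only [atRiskD, Set.mem_inter_iff, allZero, Set.mem_setOf_eq]
      constructor
      · rintro ⟨⟨hD, hY⟩, hXx, hA⟩
        refine ⟨⟨⟨fun j h1 h2 => ?_, fun j h1 h2 => ?_⟩, hXx⟩, hA⟩
        · rw [(hconsS j ω).2, hA]; exact hD j h1 h2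
        · rw [(hconsS j ω).1, hA]; exact hY j h1 h2
      · rintro ⟨⟨⟨hD, hY⟩, hXx⟩, hA⟩
        refine ⟨⟨fun j h1 h2 => ?_, fun j h1 h2 => ?_⟩, hXx, hA⟩
        · have := hD j h1 h2; rwa [(hconsS j ω).2, hA] at this
        · have := hY j h1 h2; rwa [(hconsS j ω).1, hA] at this
    have hAR_m : MeasurableSet (atRiskD Y D X A l x d) :=
      (((measurableSet_allZero hDm _).inter (measurableSet_allZero hYm _)).inter
        (hXsm x)).inter (hAsm d)
    have e4 : μ[|atRiskD Y D X A l x d] {ω | Dsep d d l ω = 1}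
        = μ[|atRiskD Y D X A l x d] {ω | D l ω = 1} := by
      apply cond_congr μ hAR_m
      ext ω
      simp only [atRiskD, Set.mem_inter_iff, Set.mem_setOf_eq]
      constructor
      · rintro ⟨⟨⟨⟨hD, hY⟩, hXx⟩, hA⟩, hv⟩
        refine ⟨⟨⟨⟨hD, hY⟩, hXx⟩, hA⟩, ?_⟩
        rw [(hconsS l ω).2, hA]; exact hv
      · rintro ⟨⟨⟨⟨hD, hY⟩, hXx⟩, hA⟩, hv⟩
        refine ⟨⟨⟨⟨hD, hY⟩, hXx⟩, hA⟩, ?_⟩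
        rw [← hA, ← (hconsS l ω).2]; exact hv
    rw [pre1, pre2, ← t1, e3, ← pre2, e4]
    rfl
  -- identification of the main-event hazard in the counterfactual world
  have hIDY : ∀ b d : ℕ, (b = 0 ∨ b = 1) → (d = 0 ∨ d = 1) → ∀ l, 1 ≤ l → l ≤ K →
      μ[|allZero (Dsep b d) l ∩ allZero (Ysep b d) (l-1) ∩ {ω | X ω = x}]
        {ω | Ysep b d l ω = 1} = hazY μ Y D X A l x b := by
    intro b d hb hd l hl1 hlK
    have step1 : μ[|allZero (Dsep b d) l ∩ allZero (Ysep b d) (l-1) ∩ {ω | X ω = x}]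
          {ω | Ysep b d l ω = 1}
        = μ[|allZero (Dsep b b) l ∩ allZero (Ysep b b) (l-1) ∩ {ω | X ω = x}]
            {ω | Ysep b b l ω = 1} := by
      rcases hb with rfl | rfl <;> rcases hd with rfl | rfl
      · rfl
      · exact hdisY 0 l x (Or.inl rfl) hl1 hlK
      · exact (hdisY 1 l x (Or.inr rfl) hl1 hlK).symm
      · rfl
    rw [step1]
    have pre1 : allZero (Dsep b b) l ∩ allZero (Ysep b b) (l-1)
        = ntraj (fun j ω => (Ysep b b j ω, Dsep b b j ω)) K ⁻¹'
            {t | (∀ j, 1 ≤ j → j ≤ l → (t j).2 = 0) ∧ ∀ j, 1 ≤ j → j ≤ l-1 → (t j).1 = 0} := by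
      ext ω
      simp only [Set.mem_inter_iff, Set.mem_preimage, allZero, Set.mem_setOf_eq]
      constructor
      · rintro ⟨hD, hY⟩
        refine ⟨fun j h1 h2 => ?_, fun j h1 h2 => ?_⟩
        · rw [ntraj_apply_in h1 (by omega)]; exact hD j h1 h2
        · rw [ntraj_apply_in h1 (by omega)]; exact hY j h1 h2
      · rintro ⟨hD, hY⟩
        refine ⟨fun j h1 h2 => ?_, fun j h1 h2 => ?_⟩
        · have := hD j h1 h2; rwa [ntraj_apply_in h1 (by omega)] at this
        · have := hY j h1 h2; rwa [ntraj_apply_in h1 (by omega)] at this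
    have pre2 : {ω | Ysep b b l ω = 1}
        = ntraj (fun j ω => (Ysep b b j ω, Dsep b b j ω)) K ⁻¹' {t | (t l).1 = 1} := by
      ext ω
      simp only [Set.mem_setOf_eq, Set.mem_preimage, ntraj_apply_in hl1 hlK]
    have t1 := cond_transfer μ (fun j ω => (Ysep b b j ω, Dsep b b j ω)) K (hZm b b)
      ((hXsm x).inter (hAsm b)) (hXsm x) (hposA x hmx b hb) hmx (hagree b b b hb hb hb)
      {t | (∀ j, 1 ≤ j → j ≤ l → (t j).2 = 0) ∧ ∀ j, 1 ≤ j → j ≤ l-1 → (t j).1 = 0}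
      {t | (t l).1 = 1}
    have e3 : ntraj (fun j ω => (Ysep b b j ω, Dsep b b j ω)) K ⁻¹'
          {t | (∀ j, 1 ≤ j → j ≤ l → (t j).2 = 0) ∧ ∀ j, 1 ≤ j → j ≤ l-1 → (t j).1 = 0}
          ∩ ({ω | X ω = x} ∩ {ω | A ω = b}) = atRiskY Y D X A l x b := by
      rw [← pre1]
      ext ω
      simp only [atRiskY, Set.mem_inter_iff, allZero, Set.mem_setOf_eq]
      constructor
      · rintro ⟨⟨hD, hY⟩, hXx, hA⟩
        refine ⟨⟨⟨fun j h1 h2 => ?_, fun j h1 h2 => ?_⟩, hXx⟩, hA⟩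
        · rw [(hconsS j ω).2, hA]; exact hD j h1 h2
        · rw [(hconsS j ω).1, hA]; exact hY j h1 h2
      · rintro ⟨⟨⟨hD, hY⟩, hXx⟩, hA⟩
        refine ⟨⟨fun j h1 h2 => ?_, fun j h1 h2 => ?_⟩, hXx, hA⟩
        · have := hD j h1 h2; rwa [(hconsS j ω).2, hA] at this
        · have := hY j h1 h2; rwa [(hconsS j ω).1, hA] at this
    have hAR_m : MeasurableSet (atRiskY Y D X A l x b) :=
      (((measurableSet_allZero hDm _).inter (measurableSet_allZero hYm _)).inter
        (hXsm x)).inter (hAsm b)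
    have e4 : μ[|atRiskY Y D X A l x b] {ω | Ysep b b l ω = 1}
        = μ[|atRiskY Y D X A l x b] {ω | Y l ω = 1} := by
      apply cond_congr μ hAR_m
      ext ω
      simp only [atRiskY, Set.mem_inter_iff, Set.mem_setOf_eq]
      constructor
      · rintro ⟨⟨⟨⟨hD, hY⟩, hXx⟩, hA⟩, hv⟩
        refine ⟨⟨⟨⟨hD, hY⟩, hXx⟩, hA⟩, ?_⟩
        rw [(hconsS l ω).1, hA]; exact hv
      · rintro ⟨⟨⟨⟨hD, hY⟩, hXx⟩, hA⟩, hv⟩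
        refine ⟨⟨⟨⟨hD, hY⟩, hXx⟩, hA⟩, ?_⟩
        rw [← hA, ← (hconsS l ω).1]; exact hv
    rw [pre1, pre2, ← t1, e3, ← pre2, e4]
    rfl
  -- factorization of the observational at-risk probability
  have hobs_fac : μ (allZero Y (k-1) ∩ allZero D k ∩ {ω | A ω = aY} ∩ {ω | X ω = x})
      = μ {ω | X ω = x} * μ[|{ω | X ω = x}] {ω | A ω = aY}
        * (∏ l ∈ Icc 1 k, (1 - hazD μ Y D X A l x aY))
        * ∏ l ∈ Icc 1 (k-1), (1 - hazY μ Y D X A l x aY) := by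
    have e : allZero Y (k-1) ∩ allZero D k ∩ {ω | A ω = aY} ∩ {ω | X ω = x}
        = allZero D k ∩ allZero Y (k-1) ∩ ({ω | X ω = x} ∩ {ω | A ω = aY}) := by
      ext ω; simp only [Set.mem_inter_iff]; tauto
    rw [e, chainRule μ Y D hYm hDm hYbin hDbin ((hXsm x).inter (hAsm aY)) k hk1]
    have eD : ∀ l ∈ Icc 1 k,
        (1 - μ[|allZero D (l-1) ∩ allZero Y (l-1) ∩ ({ω | X ω = x} ∩ {ω | A ω = aY})]
          {ω | D l ω = 1}) = 1 - hazD μ Y D X A l x aY := by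
      intro l hl
      rw [← Set.inter_assoc]
      rfl
    have eY : ∀ l ∈ Icc 1 (k-1),
        (1 - μ[|allZero D l ∩ allZero Y (l-1) ∩ ({ω | X ω = x} ∩ {ω | A ω = aY})]
          {ω | Y l ω = 1}) = 1 - hazY μ Y D X A l x aY := by
      intro l hl
      rw [← Set.inter_assoc]
      rfl
    rw [Finset.prod_congr rfl eD, Finset.prod_congr rfl eY,
      ← cond_mul_meas μ (hXsm x) {ω | A ω = aY}]
  -- factorization of the interventional at-risk probability
  have hint_fac : μ (allZero (Dsep aY aD) k ∩ allZero (Ysep aY aD) (k-1) ∩ {ω | X ω = x})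
      = μ {ω | X ω = x}
        * (∏ l ∈ Icc 1 k, (1 - hazD μ Y D X A l x aD))
        * ∏ l ∈ Icc 1 (k-1), (1 - hazY μ Y D X A l x aY) := by
    rw [chainRule μ (Ysep aY aD) (Dsep aY aD) (hYsm aY aD) (hDsm aY aD)
      (hYsbin aY aD) (hDsbin aY aD) (hXsm x) k hk1]
    have eD : ∀ l ∈ Icc 1 k,
        (1 - μ[|allZero (Dsep aY aD) (l-1) ∩ allZero (Ysep aY aD) (l-1) ∩ {ω | X ω = x}]
          {ω | Dsep aY aD l ω = 1}) = 1 - hazD μ Y D X A l x aD := by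
      intro l hl
      rw [Finset.mem_Icc] at hl
      rw [hIDD aY aD haY haD l hl.1 (le_trans hl.2 hkK)]
    have eY : ∀ l ∈ Icc 1 (k-1),
        (1 - μ[|allZero (Dsep aY aD) l ∩ allZero (Ysep aY aD) (l-1) ∩ {ω | X ω = x}]
          {ω | Ysep aY aD l ω = 1}) = 1 - hazY μ Y D X A l x aY := by
      intro l hl
      rw [Finset.mem_Icc] at hl
      rw [hIDY aY aD haY haD l hl.1 (by omega)]
    rw [Finset.prod_congr rfl eD, Finset.prod_congr rfl eY]
  -- assemble
  rw [cond_apply hEint_m, cond_apply hEobs_m, hint_fac, hobs_fac]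
  rw [hobs_fac] at hobs_ne
  have hprod_le_one : ∀ (S : Finset ℕ) (f : ℕ → ℝ≥0∞), (∀ i ∈ S, f i ≤ 1) →
      ∏ i ∈ S, f i ≠ ∞ := by
    intro S f h
    exact ne_top_of_le_ne_top ENNReal.one_ne_top
      (Finset.prod_le_one (fun i _ => zero_le) h)
  have hdDT : (∏ l ∈ Icc 1 k, (1 - hazD μ Y D X A l x aY)) ≠ ∞ :=
    hprod_le_one _ _ (fun i _ => tsub_le_self)
  have hdD'T : (∏ l ∈ Icc 1 k, (1 - hazD μ Y D X A l x aD)) ≠ ∞ :=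
    hprod_le_one _ _ (fun i _ => tsub_le_self)
  have hyPT : (∏ l ∈ Icc 1 (k-1), (1 - hazY μ Y D X A l x aY)) ≠ ∞ :=
    hprod_le_one _ _ (fun i _ => tsub_le_self)
  have hfac_ne : ∀ l a, 1 ≤ l → l ≤ k → (a = 0 ∨ a = 1) → (1 - hazD μ Y D X A l x a) ≠ 0 := by
    intro l a h1 h2 ha h
    have hlt := hDlt1 l a x h1 h2 ha hmx
    rw [tsub_eq_zero_iff_le] at h
    exact absurd hlt (not_lt.mpr h)
  have hdD0 : (∏ l ∈ Icc 1 k, (1 - hazD μ Y D X A l x aY)) ≠ 0 := by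
    rw [Finset.prod_ne_zero_iff]
    intro l hl
    rw [Finset.mem_Icc] at hl
    exact hfac_ne l aY hl.1 hl.2 haY
  have hdD'0 : (∏ l ∈ Icc 1 k, (1 - hazD μ Y D X A l x aD)) ≠ 0 := by
    rw [Finset.prod_ne_zero_iff]
    intro l hl
    rw [Finset.mem_Icc] at hl
    exact hfac_ne l aD hl.1 hl.2 haD
  have hyP0 : (∏ l ∈ Icc 1 (k-1), (1 - hazY μ Y D X A l x aY)) ≠ 0 := by
    intro h
    apply hobs_ne
    rw [h, mul_zero]
  have hpi0 : μ[|{ω | X ω = x}] {ω | A ω = aY} ≠ 0 := by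
    intro h
    apply hobs_ne
    rw [h]
    ring
  have hpiT : μ[|{ω | X ω = x}] {ω | A ω = aY} ≠ ∞ := cond_ne_top μ (hXsm x) hmx _
  have hP : (∏ l ∈ Icc 1 k,
        (1 - hazD μ Y D X A l x aY) / (1 - hazD μ Y D X A l x aD))
      = (∏ l ∈ Icc 1 k, (1 - hazD μ Y D X A l x aY))
        / (∏ l ∈ Icc 1 k, (1 - hazD μ Y D X A l x aD)) := by
    rw [ENNReal.eq_div_iff hdD'0 hdD'T, ← Finset.prod_mul_distrib]
    apply Finset.prod_congr rfl
    intro l hl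
    rw [Finset.mem_Icc] at hl
    rw [mul_comm, ENNReal.div_mul_cancel (hfac_ne l aD hl.1 hl.2 haD)
      (ne_top_of_le_ne_top ENNReal.one_ne_top tsub_le_self)]
  rw [hP]
  exact final_alg _ _ _ _ _ _ _ hposInt (measure_ne_top μ _) hposObs (measure_ne_top μ _)
    hmx (measure_ne_top μ _) hpi0 hpiT hdD0 hdDT hdD'0 hdD'T hyP0 hyPT

end Stmt12
end
end

section
/- The total (cause-specific) risk is strictly decreasing in the competing-event hazards even when the main-event hazard is unaffected: define, for hazard sequences h_Y, h_D : {1,…,K} → [0,1], the total risk R(h_Y, h_D) = Σ_{l=1}^{K} h_Y(l)·(1 − h_D(l))·Π_{q=1}^{l−1} (1 − h_Y(q))·(1 − h_D(q)). Suppose h_D and h_D' satisfy h_D(l) ≤ h_D'(l) for all l ∈ {1,…,K} with strict inequality h_D(m) < h_D'(m) at some m, and suppose h_Y(m) > 0, and h_Y(q) < 1, h_D'(q) < 1 for all q < m. Then R(h_Y, h_D') < R(h_Y, h_D). In particular, two treatments sharing the same main-event hazard sequence h_Y but with distinct competing-event hazard sequences can have different total risks, so a treatment can exhibit a nonzero total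 effect on the main event purely through its effect on the competing event. -/
/-!
STATEMENT 18: The total (cause-specific) risk is strictly decreasing in the
competing-event hazards even when the main-event hazard is unaffected. For hazard
sequences `h_Y, h_D : {1,…,K} → [0,1]`, define the total risk
`R(h_Y, h_D) = Σ_{l=1}^{K} h_Y(l)·(1 − h_D(l))·Π_{q=1}^{l−1} (1 − h_Y(q))·(1 − h_D(q))`.
Suppose `h_D` and `h_D'` satisfy `h_D(l) ≤ h_D'(l)` for all `l ∈ {1,…,K}` with
strict inequality `h_D(m) < h_D'(m)` at some `m`, and suppose `h_Y(m) > 0`, and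
`h_Y(q) < 1`, `h_D'(q) < 1` for all `q < m`. Then `R(h_Y, h_D') < R(h_Y, h_D)`.
In particular, two treatments sharing the same main-event hazard sequence but with
distinct competing-event hazard sequences can have different total risks, so a
treatment can exhibit a nonzero total effect on the main event purely through its
effect on the competing event.
-/

open Finset

theorem total_risk_strictly_decreasing_in_competing_hazard
    (K : ℕ) (hY hD hD' : ℕ → ℝ)
    (hYr : ∀ l ∈ Icc 1 K, hY l ∈ Set.Icc (0 : ℝ) 1)
    (hDr : ∀ l ∈ Icc 1 K, hD l ∈ Set.Icc (0 : ℝ) 1)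
    (hD'r : ∀ l ∈ Icc 1 K, hD' l ∈ Set.Icc (0 : ℝ) 1)
    (hle : ∀ l ∈ Icc 1 K, hD l ≤ hD' l)
    (m : ℕ) (hm : m ∈ Icc 1 K) (hstrict : hD m < hD' m)
    (hYm : 0 < hY m)
    (hYlt : ∀ q, 1 ≤ q → q < m → hY q < 1)
    (hD'lt : ∀ q, 1 ≤ q → q < m → hD' q < 1) :
    (∑ l ∈ Icc 1 K, hY l * (1 - hD' l)
        * ∏ q ∈ Icc 1 (l - 1), (1 - hY q) * (1 - hD' q))
      < ∑ l ∈ Icc 1 K, hY l * (1 - hD l)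
          * ∏ q ∈ Icc 1 (l - 1), (1 - hY q) * (1 - hD q) := by
  have hsub : ∀ l ∈ Icc 1 K, Icc 1 (l - 1) ⊆ Icc 1 K := by
    intro l hl q hq
    simp only [mem_Icc] at *
    exact ⟨hq.1, hq.2.trans ((Nat.sub_le l 1).trans hl.2)⟩
  have hprodle : ∀ l ∈ Icc 1 K,
      (∏ q ∈ Icc 1 (l - 1), (1 - hY q) * (1 - hD' q))
        ≤ ∏ q ∈ Icc 1 (l - 1), (1 - hY q) * (1 - hD q) := by
    intro l hl
    apply Finset.prod_le_prod
    · intro q hq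
      have hq' := hsub l hl hq
      have := (hYr q hq').2
      have := (hD'r q hq').2
      nlinarith [(hYr q hq').2, (hD'r q hq').2]
    · intro q hq
      have hq' := hsub l hl hq
      have h1 : 0 ≤ 1 - hY q := by linarith [(hYr q hq').2]
      have := hle q hq'
      nlinarith
  have hprodnn : ∀ l ∈ Icc 1 K,
      0 ≤ ∏ q ∈ Icc 1 (l - 1), (1 - hY q) * (1 - hD' q) := by
    intro l hl
    apply Finset.prod_nonneg
    intro q hq
    have hq' := hsub l hl hq
    nlinarith [(hYr q hq').2, (hD'r q hq').2]
  apply Finset.sum_lt_sum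
  · intro l hl
    have h1 : 0 ≤ hY l := (hYr l hl).1
    have h2 : hD l ≤ hD' l := hle l hl
    have h3 : 0 ≤ 1 - hD' l := by linarith [(hD'r l hl).2]
    have h4 : 0 ≤ 1 - hD l := by linarith
    calc hY l * (1 - hD' l) * ∏ q ∈ Icc 1 (l - 1), (1 - hY q) * (1 - hD' q)
        ≤ hY l * (1 - hD l) * ∏ q ∈ Icc 1 (l - 1), (1 - hY q) * (1 - hD' q) := by
          apply mul_le_mul_of_nonneg_right _ (hprodnn l hl)
          apply mul_le_mul_of_nonneg_left (by linarith) h1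
      _ ≤ hY l * (1 - hD l) * ∏ q ∈ Icc 1 (l - 1), (1 - hY q) * (1 - hD q) := by
          apply mul_le_mul_of_nonneg_left (hprodle l hl)
          positivity
  · refine ⟨m, hm, ?_⟩
    have hpos : 0 < ∏ q ∈ Icc 1 (m - 1), (1 - hY q) * (1 - hD' q) := by
      apply Finset.prod_pos
      intro q hq
      simp only [mem_Icc] at hq
      have hqm : q < m := lt_of_le_of_lt hq.2 (Nat.sub_lt (by omega) one_pos)
      have := hYlt q hq.1 hqm
      have := hD'lt q hq.1 hqm
      nlinarith
    calc hY m * (1 - hD' m) * ∏ q ∈ Icc 1 (m - 1), (1 - hY q) * (1 - hD' q)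
        < hY m * (1 - hD m) * ∏ q ∈ Icc 1 (m - 1), (1 - hY q) * (1 - hD' q) := by
          apply mul_lt_mul_of_pos_right _ hpos
          exact mul_lt_mul_of_pos_left (by linarith) hYm
      _ ≤ hY m * (1 - hD m) * ∏ q ∈ Icc 1 (m - 1), (1 - hY q) * (1 - hD q) := by
          apply mul_le_mul_of_nonneg_left (hprodle m hm)
          exact mul_nonneg (hYr m hm).1 (by linarith [(hDr m hm).2])
end
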